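/- Let G be a group, C a subgroup, λ a one-dimensional unitary representation (character with values in the unit circle) of C, and ρ a unitary representation of G on a Hilbert space with ρ(c) = λ(c)·1 for all c ∈ C. If an element f = Σ t_g g of the group algebra ℂG satisfies Σ_{g⁻¹h ∈ C} conj(t_g) t_h λ(g⁻¹h) = 0, then ρ(f) = 0. -/

import Mathlib

open scoped Classical

/-- Proposition (`algebra`): let `ρ` be a unitary representation of `G` on a Hilbert
space with `ρ(c) = λ(c)·1` for all `c` in a subgroup `C`, where `λ` is a
one-dimensional unitary representation of `C`.  If an element `f = Σ t_g g` of the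
group algebra `ℂG` satisfies `Σ_{g⁻¹h ∈ C} conj(t_g) t_h λ(g⁻¹h) = 0`, then
`ρ(f) = 0`. -/
theorem rho_vanishes_of_gns_kernel
    {G : Type*} [Group G] (C : Subgroup G)
    (lam : C →* ℂ) (hlam : ∀ c : C, ‖lam c‖ = 1)
    {H : Type*} [NormedAddCommGroup H] [InnerProductSpace ℂ H] [CompleteSpace H]
    (ρ : G →* (H →L[ℂ] H))
    (hunitary : ∀ g : G, ContinuousLinearMap.adjoint (ρ g) = ρ g⁻¹)
    (hscalar : ∀ c : C, ρ (c : G) = lam c • (1 : H →L[ℂ] H))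
    (f : G →₀ ℂ)
    (hker : (∑ g ∈ f.support, ∑ h ∈ f.support,
        if hc : g⁻¹ * h ∈ C then (starRingEnd ℂ) (f g) * f h * lam ⟨g⁻¹ * h, hc⟩
        else 0) = 0) :
    (∑ g ∈ f.support, f g • ρ g) = 0 := by
  classical
  -- extension of lam by zero
  set L : G → ℂ := fun k => if hc : k ∈ C then lam ⟨k, hc⟩ else 0 with hLdef
  have hL_mem : ∀ (k : G) (hc : k ∈ C), L k = lam ⟨k, hc⟩ := fun k hc => dif_pos hc
  have hL_not : ∀ (k : G), k ∉ C → L k = 0 := fun k hc => dif_neg hc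
  have hconj : ∀ c : C, (starRingEnd ℂ) (lam c) * lam c = 1 := by
    intro c
    rw [mul_comm, Complex.mul_conj]
    norm_cast
    rw [Complex.normSq_eq_norm_sq, hlam c, one_pow]
  -- representative of a coset
  set q : G → G ⧸ C := QuotientGroup.mk with hqdef
  set rep : G ⧸ C → G := Quotient.out with hrepdef
  have hrep : ∀ b : G ⧸ C, ((rep b : G) : G ⧸ C) = b := fun b => Quotient.out_eq b
  have hrepmem : ∀ (g : G), (rep (q g))⁻¹ * g ∈ C := by
    intro g
    rw [← QuotientGroup.eq, hrep]
  -- the coset sums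
  set A : G ⧸ C → ℂ := fun b => ∑ h ∈ f.support, f h * L ((rep b)⁻¹ * h) with hAdef
  -- rewrite the kernel sum
  have key : ∀ g h : G,
      (if hc : g⁻¹ * h ∈ C then (starRingEnd ℂ) (f g) * f h * lam ⟨g⁻¹ * h, hc⟩ else 0)
      = (starRingEnd ℂ) (f g * L ((rep (q g))⁻¹ * g)) *
        (f h * L ((rep (q g))⁻¹ * h)) := by
    intro g h
    set x := rep (q g) with hx
    have hxg : x⁻¹ * g ∈ C := hrepmem g
    by_cases hc : g⁻¹ * h ∈ C
    · have hxh : x⁻¹ * h ∈ C := by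
        have : x⁻¹ * h = (x⁻¹ * g) * (g⁻¹ * h) := by group
        rw [this]; exact mul_mem hxg hc
      have hmul : (⟨x⁻¹ * h, hxh⟩ : C) = ⟨x⁻¹ * g, hxg⟩ * ⟨g⁻¹ * h, hc⟩ := by
        ext; simp [mul_assoc]
      rw [dif_pos hc, hL_mem _ hxg, hL_mem _ hxh, hmul, map_mul, map_mul]
      have := hconj ⟨x⁻¹ * g, hxg⟩
      ring_nf
      ring_nf at this
      calc (starRingEnd ℂ) (f g) * f h * lam ⟨g⁻¹ * h, hc⟩
          = ((starRingEnd ℂ) (lam ⟨x⁻¹ * g, hxg⟩) * lam ⟨x⁻¹ * g, hxg⟩) *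
            ((starRingEnd ℂ) (f g) * f h * lam ⟨g⁻¹ * h, hc⟩) := by
            rw [hconj]; ring
        _ = _ := by ring
    · have hxh : x⁻¹ * h ∉ C := by
        intro hmem
        apply hc
        have : g⁻¹ * h = (x⁻¹ * g)⁻¹ * (x⁻¹ * h) := by group
        rw [this]; exact mul_mem (inv_mem hxg) hmem
      rw [dif_neg hc, hL_not _ hxh, mul_zero, mul_zero]
  have hker2 : (∑ g ∈ f.support,
      (starRingEnd ℂ) (f g * L ((rep (q g))⁻¹ * g)) * A (q g)) = 0 := by
    rw [← hker]
    refine Finset.sum_congr rfl fun g hg => ?_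
    rw [hAdef]
    simp only [Finset.mul_sum]
    exact Finset.sum_congr rfl fun h hh => (key g h).symm
  -- group by cosets
  set Q : Finset (G ⧸ C) := f.support.image (fun g => q g) with hQ
  have hmaps : ∀ g ∈ f.support, q g ∈ Q := fun g hg => Finset.mem_image_of_mem _ hg
  -- filter sum equals A b
  have hAfilter : ∀ b : G ⧸ C,
      (∑ g ∈ f.support.filter (fun g => q g = b), f g * L ((rep b)⁻¹ * g)) = A b := by
    intro b
    rw [hAdef]
    refine Finset.sum_subset (Finset.filter_subset _ _) ?_
    intro g hg hng
    have : q g ≠ b := fun h => hng (Finset.mem_filter.mpr ⟨hg, h⟩)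
    have hnot : (rep b)⁻¹ * g ∉ C := by
      intro hmem
      apply this
      rw [← QuotientGroup.eq] at hmem
      exact hmem.symm.trans (hrep b)
    rw [hL_not _ hnot, mul_zero]
  have hker3 : (∑ b ∈ Q, (starRingEnd ℂ) (A b) * A b) = 0 := by
    rw [← hker2, ← Finset.sum_fiberwise_of_maps_to hmaps]
    refine Finset.sum_congr rfl fun b hb => ?_
    have step1 : (∑ g ∈ f.support.filter (fun g => q g = b),
        (starRingEnd ℂ) (f g * L ((rep (q g))⁻¹ * g)) * A (q g))
        = ∑ g ∈ f.support.filter (fun g => q g = b),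
        (starRingEnd ℂ) (f g * L ((rep b)⁻¹ * g)) * A b := by
      refine Finset.sum_congr rfl fun g hg => ?_
      have hgb : q g = b := (Finset.mem_filter.mp hg).2
      rw [hgb]
    rw [step1, ← Finset.sum_mul, ← map_sum, hAfilter b]
  -- each A b = 0
  have hA0 : ∀ b ∈ Q, A b = 0 := by
    have hre : (∑ b ∈ Q, Complex.normSq (A b)) = 0 := by
      have : ((∑ b ∈ Q, Complex.normSq (A b) : ℝ) : ℂ) = 0 := by
        push_cast
        rw [← hker3]
        refine Finset.sum_congr rfl fun b hb => ?_
        rw [mul_comm, Complex.mul_conj]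
      exact_mod_cast this
    intro b hb
    have := (Finset.sum_eq_zero_iff_of_nonneg
      (fun b _ => Complex.normSq_nonneg (A b))).mp hre b hb
    exact Complex.normSq_eq_zero.mp this
  -- conclude
  rw [← Finset.sum_fiberwise_of_maps_to hmaps (fun g => f g • ρ g)]
  refine Finset.sum_eq_zero fun b hb => ?_
  have hterm : ∀ g ∈ f.support.filter (fun g => q g = b),
      f g • ρ g = (f g * L ((rep b)⁻¹ * g)) • ρ (rep b) := by
    intro g hg
    have hgb : q g = b := (Finset.mem_filter.mp hg).2
    have hmem : (rep b)⁻¹ * g ∈ C := by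
      rw [← QuotientGroup.eq, hrep]
      exact hgb.symm
    have hdecomp : g = rep b * ((rep b)⁻¹ * g) := by group
    have : ρ g = L ((rep b)⁻¹ * g) • ρ (rep b) := by
      conv_lhs => rw [hdecomp]
      rw [map_mul, hL_mem _ hmem, hscalar ⟨(rep b)⁻¹ * g, hmem⟩]
      simp [mul_comm]
    rw [this, smul_smul]
  rw [Finset.sum_congr rfl hterm, ← Finset.sum_smul, hAfilter b, hA0 b hb, zero_smul]
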